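/- Let L be a finite lattice and let p, q be prime intervals in L such that con(p) covers con(q) in the order of join-irreducible congruences of L. Then there exist a sublattice of L isomorphic to N_5 (or to the covering square C_2^2) and prime intervals p_0 and q_0 within it satisfying con(p) = con(p_0) and con(q) = con(q_0). -/
import Mathlib


universe u

/-- A congruence of a lattice: an equivalence relation compatible with `⊔` and `⊓`. -/
structure LatCon (L : Type u) [Lattice L] : Type u where
  rel : L → L → Prop
  refl : ∀ a, rel a a
  symm : ∀ {a b}, rel a b → rel b a
  trans : ∀ {a b c}, rel a b → rel b c → rel a c
  sup_comp : ∀ {a b c d}, rel a b → rel c d → rel (a ⊔ c) (b ⊔ d)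
  inf_comp : ∀ {a b c d}, rel a b → rel c d → rel (a ⊓ c) (b ⊓ d)

variable {L : Type u} [Lattice L]

/-- The inclusion order on congruences. -/
def LatCon.le (α β : LatCon L) : Prop := ∀ a b : L, α.rel a b → β.rel a b

/-- The principal congruence `con(x, y)`: the smallest congruence collapsing `x` and `y`. -/
def conOf (x y : L) : LatCon L where
  rel a b := ∀ θ : LatCon L, θ.rel x y → θ.rel a b
  refl a := fun θ _ => θ.refl a
  symm h := fun θ hθ => θ.symm (h θ hθ)
  trans h₁ h₂ := fun θ hθ => θ.trans (h₁ θ hθ) (h₂ θ hθ)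
  sup_comp h₁ h₂ := fun θ hθ => θ.sup_comp (h₁ θ hθ) (h₂ θ hθ)
  inf_comp h₁ h₂ := fun θ hθ => θ.inf_comp (h₁ θ hθ) (h₂ θ hθ)

/-- The bottom congruence: equality. -/
def conBot : LatCon L where
  rel a b := a = b
  refl _ := rfl
  symm h := h.symm
  trans h₁ h₂ := h₁.trans h₂
  sup_comp h₁ h₂ := by rw [h₁, h₂]
  inf_comp h₁ h₂ := by rw [h₁, h₂]

/-- The join of two congruences: the smallest congruence containing both. -/
def conJoin (α β : LatCon L) : LatCon L where
  rel a b := ∀ θ : LatCon L, α.le θ → β.le θ → θ.rel a b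
  refl a := fun θ _ _ => θ.refl a
  symm h := fun θ hα hβ => θ.symm (h θ hα hβ)
  trans h₁ h₂ := fun θ hα hβ => θ.trans (h₁ θ hα hβ) (h₂ θ hα hβ)
  sup_comp h₁ h₂ := fun θ hα hβ => θ.sup_comp (h₁ θ hα hβ) (h₂ θ hα hβ)
  inf_comp h₁ h₂ := fun θ hα hβ => θ.inf_comp (h₁ θ hα hβ) (h₂ θ hα hβ)

/-- A congruence is join-irreducible if it is not the bottom congruence and is not
the join of two congruences unless it equals one of them. -/
def LatCon.JoinIrreducible (θ : LatCon L) : Prop :=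
  θ ≠ conBot ∧ ∀ α β : LatCon L, θ = conJoin α β → θ = α ∨ θ = β

/-- `p` is a prime interval: its bottom is covered by its top. -/
def IsPrimeInt (p : L × L) : Prop := p.1 ⋖ p.2

/-- `[a, b]` is perspective up to `[c, d]`: `b ⊔ c = d` and `a = b ⊓ c`. -/
def PerspUp (p q : L × L) : Prop := p.2 ⊔ q.1 = q.2 ∧ p.1 = p.2 ⊓ q.1

/-- `[a, b]` is perspective down to `[c, d]`: `a ⊓ d = c` and `a ⊔ d = b`. -/
def PerspDn (p q : L × L) : Prop := p.1 ⊓ q.2 = q.1 ∧ p.1 ⊔ q.2 = p.2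

/-- Perspectivity: up or down. -/
def Persp (p q : L × L) : Prop := PerspUp p q ∨ PerspDn p q

/-- `p` is prime-perspective down to `q`: `1_q ≤ 1_p`, `p` is perspective down onto the
interval `[0_p ⊓ 1_q, 1_q]` (i.e. `0_p ⊔ 1_q = 1_p`), and `q ⊆ [0_p ⊓ 1_q, 1_q]`
(i.e. `0_p ⊓ 1_q ≤ 0_q`). -/
def PPerspDn (p q : L × L) : Prop := q.2 ≤ p.2 ∧ p.1 ⊔ q.2 = p.2 ∧ p.1 ⊓ q.2 ≤ q.1

/-- `p` is prime-perspective up to `q`: the dual of `PPerspDn`. -/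
def PPerspUp (p q : L × L) : Prop := p.1 ≤ q.1 ∧ p.2 ⊓ q.1 = p.1 ∧ q.2 ≤ p.2 ⊔ q.1

/-- Prime-perspectivity: up or down. -/
def PPersp (p q : L × L) : Prop := PPerspUp p q ∨ PPerspDn p q

/-- Prime-projectivity: the reflexive-transitive extension of prime-perspectivity. -/
def PProj : (L × L) → (L × L) → Prop := Relation.ReflTransGen PPersp

/-- `q` is collapsed by `con(p)`. -/
def Collapses (p q : L × L) : Prop := (conOf p.1 p.2).rel q.1 q.2

/-- `{e, a, b, c, t}` forms a pentagon (`N₅`) sublattice: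
`e < a < t`, `e < b < c < t`, with `a` a complement of both `b` and `c`. -/
def IsN5 (e a b c t : L) : Prop :=
  e < a ∧ a < t ∧ e < b ∧ b < c ∧ c < t ∧
  a ⊓ b = e ∧ a ⊓ c = e ∧ a ⊔ b = t ∧ a ⊔ c = t

/-- `{e, a, b, t}` forms a sublattice isomorphic to the four-element Boolean lattice. -/
def IsBool4 (e a b t : L) : Prop :=
  a ⊓ b = e ∧ a ⊔ b = t ∧ ¬ a ≤ b ∧ ¬ b ≤ a

/-- `{e, a, b, t}` is a covering square `C₂²`. -/
def IsCovSquare (e a b t : L) : Prop :=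
  a ⊓ b = e ∧ a ⊔ b = t ∧ e ⋖ a ∧ e ⋖ b ∧ a ⋖ t ∧ b ⋖ t

/-- `{e, a, b, c, t}` forms a diamond (`M₃`) sublattice. -/
def IsM3 (e a b c t : L) : Prop :=
  a ⊓ b = e ∧ a ⊓ c = e ∧ b ⊓ c = e ∧ a ⊔ b = t ∧ a ⊔ c = t ∧ b ⊔ c = t ∧
  e < a ∧ e < b ∧ e < c ∧ a ≠ b ∧ a ≠ c ∧ b ≠ c

/-- A lattice is slim if it contains no `M₃` sublattice. -/
def Slim (L : Type u) [Lattice L] : Prop := ¬ ∃ e a b c t : L, IsM3 e a b c t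

/-- (Upper) semimodularity: `a ⊓ b ⋖ a` implies `b ⋖ a ⊔ b`. -/
def Semimodular (L : Type u) [Lattice L] : Prop := ∀ a b : L, a ⊓ b ⋖ a → b ⋖ a ⊔ b

/-- A planar diagram of a finite lattice: every element gets a position in the plane,
the vertical coordinate is strictly order-preserving, distinct elements get distinct
positions, and the straight-line edges of distinct covering pairs do not cross. -/
structure Diagram (L : Type u) [Lattice L] where
  x : L → ℚ
  y : L → ℚ
  y_strictMono : ∀ {a b : L}, a < b → y a < y b
  inj : Function.Injective fun v => (x v, y v)
  planar : ∀ a b c d : L, a ⋖ b → c ⋖ d →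
    (openSegment ℚ ((x a, y a) : ℚ × ℚ) (x b, y b) ∩
      openSegment ℚ ((x c, y c) : ℚ × ℚ) (x d, y d)).Nonempty → a = c ∧ b = d

/-- In the diagram `D`, the prime interval `p` swings to the prime interval `q`:
they share the same top, that top covers at least three elements, and `0_q` is
neither the left-most nor the right-most lower cover of the common top. -/
def Swing (D : Diagram L) (p q : L × L) : Prop :=
  p.2 = q.2 ∧ 3 ≤ Nat.card {z : L // z ⋖ p.2} ∧
  (¬ ∀ z : L, z ⋖ p.2 → D.x q.1 ≤ D.x z) ∧ (¬ ∀ z : L, z ⋖ p.2 → D.x z ≤ D.x q.1)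

/-- The conclusion of the Swing Lemma for prime intervals `p`, `q`: there are pairwise
distinct prime intervals `r = r₀, …, rₙ = q` with `p` perspective up to `r` and each
`rᵢ` perspective down to, or swinging to, `r_{i+1}`. -/
def SwingSeq (D : Diagram L) (p q : L × L) : Prop :=
  ∃ (n : ℕ) (r : Fin (n + 1) → L × L), Function.Injective r ∧
    (∀ i, IsPrimeInt (r i)) ∧ PerspUp p (r 0) ∧ r (Fin.last n) = q ∧
    ∀ i : Fin n, PerspDn (r i.castSucc) (r i.succ) ∨ Swing D (r i.castSucc) (r i.succ)

/-- The Swing Lemma holds for the lattice `L` with planar diagram `D`. -/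
def SwingLemmaHolds (L : Type u) [Lattice L] (D : Diagram L) : Prop :=
  ∀ p q : L × L, IsPrimeInt p → IsPrimeInt q → p ≠ q →
    (Collapses p q ↔ SwingSeq D p q)

/-- A corner of a finite lattice: a doubly irreducible element, distinct from the
extremes, whose unique upper cover covers exactly two elements and whose unique
lower cover is covered by exactly two elements. -/
def IsLatCorner (c : L) : Prop :=
  ¬ IsMin c ∧ ¬ IsMax c ∧ (∃! u : L, c ⋖ u) ∧ (∃! v : L, v ⋖ c) ∧
  (∀ u : L, c ⋖ u → Nat.card {z : L // z ⋖ u} = 2) ∧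
  (∀ v : L, v ⋖ c → Nat.card {z : L // v ⋖ z} = 2)

/-! ### Auxiliary development for the proof -/

section AuxProof

theorem LatCon.ext' {α β : LatCon L} (h : α.rel = β.rel) : α = β := by
  cases α; cases β; cases h; rfl

theorem LatCon.le_antisymm' {α β : LatCon L} (h1 : α.le β) (h2 : β.le α) : α = β :=
  LatCon.ext' (funext fun a => funext fun b => propext ⟨h1 a b, h2 a b⟩)

theorem conOf_rel_self (x y : L) : (conOf x y).rel x y := fun _ h => h

theorem conOf_le {x y : L} {θ : LatCon L} (h : θ.rel x y) : (conOf x y).le θ :=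
  fun _ _ hab => hab θ h

theorem LatCon.rel_of_le_of_le {θ : LatCon L} {x y x' y' : L} (h : θ.rel x y)
    (h1 : x ≤ x') (h2 : x' ≤ y') (h3 : y' ≤ y) : θ.rel x' y' := by
  have h4 := θ.sup_comp h (θ.refl x')
  rw [sup_eq_right.2 h1, sup_eq_left.2 (h2.trans h3)] at h4
  have h5 := θ.inf_comp h4 (θ.refl y')
  rw [inf_eq_left.2 h2, inf_eq_right.2 h3] at h5
  exact h5

/-- A single prime-perspectivity step between prime intervals. -/
def PStep (r s : L × L) : Prop := PPersp r s ∧ IsPrimeInt s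

/-- Prime-projectivity through prime intervals. -/
def PPP (p q : L × L) : Prop := Relation.ReflTransGen (PStep (L := L)) p q

theorem PStep.collapse {r s : L × L} (h : PStep r s) (θ : LatCon L) (hr : θ.rel r.1 r.2) :
    θ.rel s.1 s.2 := by
  obtain ⟨hpe, hs⟩ := h
  rcases hpe with ⟨h1, h2, h3⟩ | ⟨h1, h2, h3⟩
  · have h4 := θ.sup_comp hr (θ.refl s.1)
    rw [sup_eq_right.2 h1] at h4
    exact LatCon.rel_of_le_of_le h4 le_rfl hs.le h3
  · have h4 := θ.inf_comp hr (θ.refl s.2)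
    rw [inf_eq_right.2 h1] at h4
    exact LatCon.rel_of_le_of_le h4 h3 hs.le le_rfl

theorem PPP.collapse {r s : L × L} (h : PPP r s) (θ : LatCon L) (hr : θ.rel r.1 r.2) :
    θ.rel s.1 s.2 := by
  induction h with
  | refl => exact hr
  | tail _ hstep ih => exact hstep.collapse θ ih

theorem PPP.con_le {r s : L × L} (h : PPP r s) : (conOf s.1 s.2).le (conOf r.1 r.2) :=
  conOf_le (h.collapse _ (conOf_rel_self _ _))

/-- All prime subintervals of `[x, y]` are reachable from `p` by prime-projectivity. -/
def Col (p : L × L) (x y : L) : Prop :=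
  ∀ u v : L, x ≤ u → u ⋖ v → v ≤ y → PPP p (u, v)

theorem Col.mono {p : L × L} {x y x' y' : L} (h : Col p x y) (h1 : x ≤ x') (h2 : y' ≤ y) :
    Col p x' y' := fun u v hu huv hv => h u v (h1.trans hu) huv (hv.trans h2)

theorem pperspUp_between {g h w s t : L} (hgh : g ⋖ h) (hs : g ⊔ w ≤ s) (hst : s ⋖ t)
    (ht : t ≤ h ⊔ w) : PPerspUp (g, h) (s, t) := by
  have hgs : g ≤ s := le_sup_left.trans hs
  have hws : w ≤ s := le_sup_right.trans hs
  refine ⟨hgs, ?_, ht.trans (sup_le le_sup_left (hws.trans le_sup_right))⟩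
  rcases hgh.eq_or_eq (le_inf hgh.le hgs) inf_le_left with e | e
  · exact e
  · exact absurd (ht.trans (sup_le (inf_eq_left.1 e) hws)) hst.lt.not_ge

theorem pperspDn_between {g h w s t : L} (hgh : g ⋖ h) (hs : g ⊓ w ≤ s) (hst : s ⋖ t)
    (ht : t ≤ h ⊓ w) : PPerspDn (g, h) (s, t) := by
  have hth : t ≤ h := ht.trans inf_le_left
  have htw : t ≤ w := ht.trans inf_le_right
  refine ⟨hth, ?_, le_trans (le_inf inf_le_left (inf_le_right.trans htw)) hs⟩
  rcases hgh.eq_or_eq (le_sup_left : g ≤ g ⊔ t) (sup_le hgh.le hth) with e | e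
  · exact absurd ((le_inf (sup_eq_left.1 e) htw).trans hs) hst.lt.not_ge
  · exact e

theorem col_sup [Fintype L] {p : L × L} {x y : L} (hxy : x ≤ y) (h : Col p x y) (w : L) :
    Col p (x ⊔ w) (y ⊔ w) := by
  have aux : ∀ y' : L, x ≤ y' → y' ≤ y →
      ∀ u v : L, x ≤ u → u ⋖ v → v ≤ y' ⊔ u → PPP p (u, v) := by
    intro y'
    induction y' using WellFoundedLT.induction with
    | _ y' ih =>
    intro hxy' hy'y u v hu huv hv
    have hvu : ¬ v ≤ u := fun hh => absurd (huv.lt.trans_le hh) (lt_irrefl u)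
    have hxlt : x < y' := by
      rcases hxy'.lt_or_eq with hlt | rfl
      · exact hlt
      · exact absurd (hv.trans (sup_le hu le_rfl)) hvu
    obtain ⟨c, hxc, hcy'⟩ := exists_le_covBy_of_lt hxlt
    by_cases hvc : v ≤ c ⊔ u
    · exact ih c hcy'.lt hxc (hcy'.le.trans hy'y) u v hu huv hvc
    · have hpc : PPP p (c, y') := h c y' hxc hcy' hy'y
      have hlt2 : c ⊔ u < (c ⊔ u) ⊔ v := by
        refine lt_of_le_of_ne le_sup_left fun e => hvc ?_
        rw [e]; exact le_sup_right
      obtain ⟨s, hs, hst⟩ := exists_le_covBy_of_lt hlt2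
      have h1 : PPerspUp (c, y') (s, (c ⊔ u) ⊔ v) := by
        refine pperspUp_between hcy' (w := c ⊔ u) ((sup_le le_sup_left le_rfl).trans hs) hst ?_
        exact sup_le le_sup_right (hv.trans (sup_le le_sup_left (le_sup_right.trans le_sup_right)))
      have hvs : ¬ v ≤ s := fun hh => hst.lt.not_ge (sup_le hs hh)
      have h2 : PPerspDn (s, (c ⊔ u) ⊔ v) (u, v) := by
        refine ⟨le_sup_right, ?_, ?_⟩
        · rcases hst.eq_or_eq (le_sup_left : s ≤ s ⊔ v) (sup_le hst.le le_sup_right) with e | e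
          · exact absurd (sup_eq_left.1 e) hvs
          · exact e
        · rcases huv.eq_or_eq (le_inf ((le_sup_right.trans hs : u ≤ s)) huv.le) inf_le_right
            with e | e
          · exact e.le
          · exact absurd (inf_eq_right.1 e) hvs
      exact ((hpc.tail ⟨Or.inl h1, hst⟩).tail ⟨Or.inr h2, huv⟩)
  intro u v hu huv hv
  have hwu : w ≤ u := le_sup_right.trans hu
  exact aux y hxy le_rfl u v (le_sup_left.trans hu) huv
    (hv.trans (sup_le le_sup_left (hwu.trans le_sup_right)))

theorem col_inf [Fintype L] {p : L × L} {x y : L} (hxy : x ≤ y) (h : Col p x y) (w : L) :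
    Col p (x ⊓ w) (y ⊓ w) := by
  have aux : ∀ x' : L, x ≤ x' → x' ≤ y →
      ∀ u v : L, u ⋖ v → v ≤ y → x' ⊓ v ≤ u → PPP p (u, v) := by
    intro x'
    induction x' using WellFoundedGT.induction with
    | _ x' ih =>
    intro hxx' hx'y u v huv hv hu
    have hvu : ¬ v ≤ u := fun hh => absurd (huv.lt.trans_le hh) (lt_irrefl u)
    have hxlt2 : x' < y := by
      rcases hx'y.lt_or_eq with hlt | rfl
      · exact hlt
      · exact absurd ((le_inf hv le_rfl).trans hu) hvu
    obtain ⟨c, hx'c, hcy⟩ := exists_covBy_le_of_lt hxlt2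
    by_cases hcv : c ⊓ v ≤ u
    · exact ih c hx'c.lt (hxx'.trans hx'c.le) hcy u v huv hv hcv
    · have hpc : PPP p (x', c) := h x' c hxx' hx'c hcy
      have hlt2 : u ⊓ (c ⊓ v) < c ⊓ v := by
        refine lt_of_le_of_ne inf_le_right fun e => hcv ?_
        rw [← e]; exact inf_le_left
      obtain ⟨t, htc, htv⟩ := exists_covBy_le_of_lt hlt2
      have h1 : PPerspDn (x', c) (u ⊓ (c ⊓ v), t) := by
        refine pperspDn_between hx'c (w := c ⊓ v)
          (le_inf ((le_inf inf_le_left (inf_le_right.trans inf_le_right)).trans hu)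
            inf_le_right) htc ?_
        exact le_inf (htv.trans inf_le_left) htv
      have hvt : ¬ t ≤ u := fun hh => htc.lt.not_ge (le_inf hh htv)
      have h2 : PPerspUp (u ⊓ (c ⊓ v), t) (u, v) := by
        refine ⟨inf_le_left, ?_, ?_⟩
        · rcases htc.eq_or_eq (le_inf htc.le inf_le_left : u ⊓ (c ⊓ v) ≤ t ⊓ u) inf_le_left
            with e | e
          · exact e
          · exact absurd (inf_eq_left.1 e) hvt
        · rcases huv.eq_or_eq (le_sup_right : u ≤ t ⊔ u)
            (sup_le (htv.trans inf_le_right) huv.le) with e | e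
          · exact absurd (sup_eq_right.1 e) hvt
          · exact e.ge
      exact ((hpc.tail ⟨Or.inr h1, htc⟩).tail ⟨Or.inl h2, huv⟩)
  intro u v hu huv hv
  have hvw : v ≤ w := hv.trans inf_le_right
  exact aux x le_rfl hxy u v huv (hv.trans inf_le_left)
    ((le_inf inf_le_left (inf_le_right.trans hvw)).trans hu)

theorem col_trans3 [Fintype L] {p : L × L} {x y z : L} (hxy : x ≤ y) (hyz : y ≤ z)
    (h1 : Col p x y) (h2 : Col p y z) : Col p x z := by
  intro u v hu huv hv
  rcases huv.eq_or_eq (le_inf huv.le le_sup_left : u ≤ v ⊓ (u ⊔ y)) inf_le_left with e | e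
  · -- v ⊓ (u ⊔ y) = u : use h2 restricted by ⊓ v
    exact col_inf hyz h2 v u v
      ((le_inf inf_le_right (inf_le_left.trans le_sup_right)).trans e.le) huv (le_inf hv le_rfl)
  · -- v ⊓ (u ⊔ y) = v, i.e. v ≤ u ⊔ y : use h1 joined with u
    refine col_sup hxy h1 u u v (sup_le hu le_rfl) huv ?_
    have hvuy : v ≤ u ⊔ y := inf_eq_left.1 e
    rwa [sup_comm u y] at hvuy

/-- The congruence of all pairs whose prime subintervals are prime-projective from `p`. -/
def primeCon [Fintype L] (p : L × L) : LatCon L where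
  rel a b := Col p (a ⊓ b) (a ⊔ b)
  refl a := by
    intro u v hu huv hv
    rw [inf_idem] at hu
    rw [sup_idem] at hv
    exact absurd (huv.lt.trans_le (hv.trans hu)) (lt_irrefl u)
  symm {a b} h := by
    show Col p (b ⊓ a) (b ⊔ a)
    rw [inf_comm b a, sup_comm b a]; exact h
  trans {a b c} hab' hbc' := by
    have hab : Col p (a ⊓ b) (a ⊔ b) := hab'
    have hbc : Col p (b ⊓ c) (b ⊔ c) := hbc'
    show Col p (a ⊓ c) (a ⊔ c)
    have s1 : Col p a (a ⊔ b) := hab.mono inf_le_left le_rfl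
    have s1' : Col p b (a ⊔ b) := hab.mono inf_le_right le_rfl
    have s2 : Col p b (b ⊔ c) := hbc.mono inf_le_left le_rfl
    have s2' : Col p c (b ⊔ c) := hbc.mono inf_le_right le_rfl
    have s3 : Col p (a ⊔ b) (a ⊔ b ⊔ c) := by
      have h' := col_sup (le_sup_left : b ≤ b ⊔ c) s2 (a ⊔ b)
      exact h'.mono (sup_le le_sup_right le_rfl)
        (sup_le (sup_le (le_sup_left.trans le_sup_right) (le_sup_right.trans le_sup_right))
          (le_sup_right.trans le_sup_left))
    have s4 : Col p a (a ⊔ b ⊔ c) := col_trans3 le_sup_left le_sup_left s1 s3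
    have s5 : Col p (b ⊔ c) (a ⊔ b ⊔ c) := by
      have h' := col_sup (le_sup_right : b ≤ a ⊔ b) s1' (b ⊔ c)
      exact h'.mono (sup_le le_sup_left le_rfl)
        (sup_le (sup_le (le_sup_left.trans le_sup_left) (le_sup_right.trans le_sup_left))
          (le_sup_right.trans le_sup_right))
    have s6 : Col p c (a ⊔ b ⊔ c) :=
      col_trans3 le_sup_right (sup_le (le_sup_right.trans le_sup_left) le_sup_right) s2' s5
    have haabc : a ≤ a ⊔ b ⊔ c := le_sup_left.trans le_sup_left
    have hcabc : c ≤ a ⊔ b ⊔ c := le_sup_right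
    have hacabc : a ⊔ c ≤ a ⊔ b ⊔ c := sup_le haabc hcabc
    have s7 : Col p a (a ⊔ c) := by
      have h' := col_inf haabc s4 (a ⊔ c)
      exact h'.mono inf_le_left (le_inf hacabc le_rfl)
    have s8 : Col p c (a ⊔ c) := by
      have h' := col_inf hcabc s6 (a ⊔ c)
      exact h'.mono inf_le_left (le_inf hacabc le_rfl)
    have s9 : Col p (a ⊓ c) a := by
      have h' := col_inf (le_sup_right : c ≤ a ⊔ c) s8 a
      exact h'.mono (le_inf inf_le_right inf_le_left) (le_inf le_sup_left le_rfl)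
    exact col_trans3 inf_le_left le_sup_left s9 s7
  sup_comp {a b c d} hab' hcd' := by
    have hab : Col p (a ⊓ b) (a ⊔ b) := hab'
    have hcd : Col p (c ⊓ d) (c ⊔ d) := hcd'
    show Col p ((a ⊔ c) ⊓ (b ⊔ d)) ((a ⊔ c) ⊔ (b ⊔ d))
    have u1 : Col p ((a ⊓ b) ⊔ (c ⊓ d)) ((a ⊔ b) ⊔ (c ⊓ d)) := col_sup inf_le_sup hab (c ⊓ d)
    have u2 : Col p ((a ⊔ b) ⊔ (c ⊓ d)) ((a ⊔ b) ⊔ (c ⊔ d)) := by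
      have h' := col_sup inf_le_sup hcd (a ⊔ b)
      exact h'.mono (sup_comm _ _).le (sup_comm _ _).le
    have u3 : Col p ((a ⊓ b) ⊔ (c ⊓ d)) ((a ⊔ b) ⊔ (c ⊔ d)) :=
      col_trans3 (sup_le_sup_right inf_le_sup _) (sup_le_sup_left inf_le_sup _) u1 u2
    refine u3.mono ?_ ?_
    · exact sup_le (le_inf (inf_le_left.trans le_sup_left) (inf_le_right.trans le_sup_left))
        (le_inf (inf_le_left.trans le_sup_right) (inf_le_right.trans le_sup_right))
    · exact sup_le (sup_le (le_sup_left.trans le_sup_left) (le_sup_left.trans le_sup_right))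
        (sup_le (le_sup_right.trans le_sup_left) (le_sup_right.trans le_sup_right))
  inf_comp {a b c d} hab' hcd' := by
    have hab : Col p (a ⊓ b) (a ⊔ b) := hab'
    have hcd : Col p (c ⊓ d) (c ⊔ d) := hcd'
    show Col p ((a ⊓ c) ⊓ (b ⊓ d)) ((a ⊓ c) ⊔ (b ⊓ d))
    have u1 : Col p ((a ⊓ b) ⊓ (c ⊓ d)) ((a ⊔ b) ⊓ (c ⊓ d)) := col_inf inf_le_sup hab (c ⊓ d)
    have u2 : Col p ((a ⊔ b) ⊓ (c ⊓ d)) ((a ⊔ b) ⊓ (c ⊔ d)) := by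
      have h' := col_inf inf_le_sup hcd (a ⊔ b)
      exact h'.mono (inf_comm _ _).le (inf_comm _ _).le
    have u3 : Col p ((a ⊓ b) ⊓ (c ⊓ d)) ((a ⊔ b) ⊓ (c ⊔ d)) :=
      col_trans3 (inf_le_inf_right _ inf_le_sup) (inf_le_inf_left _ inf_le_sup) u1 u2
    refine u3.mono ?_ ?_
    · exact le_inf (inf_le_inf inf_le_left inf_le_left) (inf_le_inf inf_le_right inf_le_right)
    · exact sup_le (le_inf (inf_le_left.trans le_sup_left) (inf_le_right.trans le_sup_left))
        (le_inf (inf_le_left.trans le_sup_right) (inf_le_right.trans le_sup_right))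

theorem primeCon_rel_self [Fintype L] {p : L × L} (hp : IsPrimeInt p) :
    (primeCon p).rel p.1 p.2 := by
  intro u v hu huv hv
  rw [inf_eq_left.2 hp.le] at hu
  rw [sup_eq_right.2 hp.le] at hv
  obtain rfl : u = p.1 := by
    rcases hp.eq_or_eq hu (huv.le.trans hv) with e | e
    · exact e
    · exact absurd (huv.lt.trans_le (hv.trans e.ge)) (lt_irrefl _)
  obtain rfl : v = p.2 := by
    rcases hp.eq_or_eq (huv.le) hv with e | e
    · exact absurd (e ▸ huv.lt) (lt_irrefl _)
    · exact e
  exact Relation.ReflTransGen.refl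

theorem collapse_ppp [Fintype L] {p q : L × L} (hp : IsPrimeInt p) (hq : IsPrimeInt q)
    (h : (conOf p.1 p.2).rel q.1 q.2) : PPP p q := by
  have h2 : (primeCon p).rel q.1 q.2 := h (primeCon p) (primeCon_rel_self hp)
  exact h2 q.1 q.2 inf_le_left hq le_sup_right

/-- The concrete join of two congruences. -/
def JRel (α β : LatCon L) : L → L → Prop :=
  Relation.ReflTransGen (fun a b => α.rel a b ∨ β.rel a b)

theorem JRel.symm' {α β : LatCon L} {a b : L} (h : JRel α β a b) : JRel α β b a := by
  induction h with
  | refl => exact .refl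
  | tail _ hstep ih => exact Relation.ReflTransGen.head (hstep.imp α.symm β.symm) ih

theorem JRel.sup_right {α β : LatCon L} {a b : L} (h : JRel α β a b) (c : L) :
    JRel α β (a ⊔ c) (b ⊔ c) := by
  induction h with
  | refl => exact .refl
  | tail _ hstep ih =>
      exact ih.tail (hstep.imp (fun h' => α.sup_comp h' (α.refl c))
        (fun h' => β.sup_comp h' (β.refl c)))

theorem JRel.inf_right {α β : LatCon L} {a b : L} (h : JRel α β a b) (c : L) :
    JRel α β (a ⊓ c) (b ⊓ c) := by
  induction h with
  | refl => exact .refl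
  | tail _ hstep ih =>
      exact ih.tail (hstep.imp (fun h' => α.inf_comp h' (α.refl c))
        (fun h' => β.inf_comp h' (β.refl c)))

def JCon (α β : LatCon L) : LatCon L where
  rel := JRel α β
  refl _ := .refl
  symm h := h.symm'
  trans h1 h2 := h1.trans h2
  sup_comp {a b c d} h1 h2 := by
    have t1 := h1.sup_right c
    have t2 := h2.sup_right b
    rw [sup_comm c b, sup_comm d b] at t2
    exact t1.trans t2
  inf_comp {a b c d} h1 h2 := by
    have t1 := h1.inf_right c
    have t2 := h2.inf_right b
    rw [inf_comm c b, inf_comm d b] at t2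
    exact t1.trans t2

theorem le_conJoin_left (α β : LatCon L) : α.le (conJoin α β) :=
  fun a b h _ hα _ => hα a b h

theorem le_conJoin_right (α β : LatCon L) : β.le (conJoin α β) :=
  fun a b h _ _ hβ => hβ a b h

theorem conJoin_rel_jrel {α β : LatCon L} {a b : L} (h : (conJoin α β).rel a b) :
    JRel α β a b :=
  h (JCon α β) (fun _ _ h' => Relation.ReflTransGen.single (Or.inl h'))
    (fun _ _ h' => Relation.ReflTransGen.single (Or.inr h'))

theorem conOf_joinIrreducible {u v : L} (h : u ⋖ v) : (conOf u v).JoinIrreducible := by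
  constructor
  · intro e
    have h1 : (conOf u v).rel u v := conOf_rel_self u v
    rw [e] at h1
    exact h.ne h1
  · intro α β e
    have h1 : (conJoin α β).rel u v := by rw [← e]; exact conOf_rel_self u v
    have h2 : JRel α β u v := conJoin_rel_jrel h1
    have key : ∀ z : L, JRel α β u z →
        ((z ⊔ u) ⊓ v = u ∨ (α.rel u v ∨ β.rel u v)) := by
      intro z hz
      induction hz with
      | refl => left; rw [sup_idem, inf_eq_left.2 h.le]
      | @tail c d _ hstep ih =>
        rcases ih with hfc | hdone
        · have hrel : α.rel ((c ⊔ u) ⊓ v) ((d ⊔ u) ⊓ v) ∨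
              β.rel ((c ⊔ u) ⊓ v) ((d ⊔ u) ⊓ v) := by
            rcases hstep with h' | h'
            · exact Or.inl (α.inf_comp (α.sup_comp h' (α.refl u)) (α.refl v))
            · exact Or.inr (β.inf_comp (β.sup_comp h' (β.refl u)) (β.refl v))
          rcases h.eq_or_eq (le_inf le_sup_right h.le : u ≤ (d ⊔ u) ⊓ v) inf_le_right
            with e1 | e1
          · exact Or.inl e1
          · rcases hrel with h' | h'
            · right; left; rw [hfc, e1] at h'; exact h'
            · right; right; rw [hfc, e1] at h'; exact h'
        · exact Or.inr hdone
    rcases key v h2 with hfv | hdone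
    · rw [sup_eq_left.2 h.le, inf_idem] at hfv
      exact absurd hfv h.ne'
    · rcases hdone with hα | hβ
      · exact Or.inl (LatCon.le_antisymm' (conOf_le hα)
          (by rw [e]; exact le_conJoin_left α β))
      · exact Or.inr (LatCon.le_antisymm' (conOf_le hβ)
          (by rw [e]; exact le_conJoin_right α β))

theorem perspUp_con_eq {r s : L × L} (h : PerspUp r s) : conOf r.1 r.2 = conOf s.1 s.2 := by
  obtain ⟨h1, h2⟩ := h
  have hr1s1 : r.1 ≤ s.1 := h2.le.trans inf_le_right
  have hr2s2 : r.2 ≤ s.2 := le_sup_left.trans h1.le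
  apply LatCon.le_antisymm'
  · apply conOf_le
    have h4 := (conOf s.1 s.2).inf_comp (conOf_rel_self s.1 s.2) ((conOf s.1 s.2).refl r.2)
    rw [inf_comm s.1 r.2, ← h2, inf_eq_right.2 hr2s2] at h4
    exact h4
  · apply conOf_le
    have h4 := (conOf r.1 r.2).sup_comp (conOf_rel_self r.1 r.2) ((conOf r.1 r.2).refl s.1)
    rw [h1, sup_eq_right.2 hr1s1] at h4
    exact h4

theorem perspDn_con_eq {r s : L × L} (h : PerspDn r s) : conOf r.1 r.2 = conOf s.1 s.2 := by
  obtain ⟨h1, h2⟩ := h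
  have hs1r1 : s.1 ≤ r.1 := h1.ge.trans inf_le_left
  have hs2r2 : s.2 ≤ r.2 := le_sup_right.trans h2.le
  apply LatCon.le_antisymm'
  · apply conOf_le
    have h4 := (conOf s.1 s.2).sup_comp (conOf_rel_self s.1 s.2) ((conOf s.1 s.2).refl r.1)
    rw [sup_eq_right.2 hs1r1, sup_comm s.2 r.1, h2] at h4
    exact h4
  · apply conOf_le
    have h4 := (conOf r.1 r.2).inf_comp (conOf_rel_self r.1 r.2) ((conOf r.1 r.2).refl s.2)
    rw [h1, inf_eq_right.2 hs2r2] at h4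
    exact h4

theorem drop_N5 {r s : L × L} (hr : IsPrimeInt r) (hs : IsPrimeInt s) (hpersp : PPersp r s)
    (hne : conOf r.1 r.2 ≠ conOf s.1 s.2) :
    ∃ e a b c t : L, IsN5 e a b c t ∧ ({r.1, r.2, s.1, s.2} : Set L) ⊆ {e, a, b, c, t} := by
  obtain ⟨a, b⟩ := r
  obtain ⟨c, d⟩ := s
  replace hr : a ⋖ b := hr
  replace hs : c ⋖ d := hs
  rcases hpersp with ⟨h1, h2, h3⟩ | ⟨h1, h2, h3⟩
  · -- up: a ≤ c, b ⊓ c = a, d ≤ b ⊔ c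
    replace h1 : a ≤ c := h1
    replace h2 : b ⊓ c = a := h2
    replace h3 : d ≤ b ⊔ c := h3
    have hdt : d < b ⊔ c := by
      refine lt_of_le_of_ne h3 fun e => ?_
      exact hne (perspUp_con_eq ⟨e.symm, h2.symm⟩)
    have hbd : b ⊓ d = a := by
      rcases hr.eq_or_eq (le_inf hr.le (h1.trans hs.le)) inf_le_left with e | e
      · exact e
      · exact absurd (sup_le (inf_eq_left.1 e) hs.le) hdt.not_ge
    have hbds : b ⊔ d = b ⊔ c :=
      le_antisymm (sup_le le_sup_left h3) (sup_le le_sup_left (hs.le.trans le_sup_right))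
    have hbt : b < b ⊔ c := by
      refine lt_of_le_of_ne le_sup_left fun e => ?_
      have hdb : d ≤ b := h3.trans e.ge
      have hda : d = a := by
        have h5 : b ⊓ d = d := inf_eq_right.2 hdb
        rw [h5] at hbd; exact hbd
      exact absurd (hda ▸ hs.lt) (not_lt_of_ge h1)
    have hac : a < c := by
      refine lt_of_le_of_ne h1 fun e => ?_
      exact hbt.ne' (by rw [← e, sup_eq_left.2 hr.le])
    refine ⟨a, b, c, d, b ⊔ c, ⟨hr.lt, hbt, hac, hs.lt, hdt, h2, hbd, rfl, hbds⟩, ?_⟩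
    intro x hx
    simp at hx ⊢
    tauto
  · -- down: d ≤ b, a ⊔ d = b, a ⊓ d ≤ c
    replace h1 : d ≤ b := h1
    replace h2 : a ⊔ d = b := h2
    replace h3 : a ⊓ d ≤ c := h3
    have hec : a ⊓ d < c := by
      refine lt_of_le_of_ne h3 fun e => ?_
      exact hne (perspDn_con_eq ⟨e, h2⟩)
    have hca : ¬ c ≤ a := fun hh => hec.not_ge (le_inf hh hs.le)
    have hace : a ⊓ c = a ⊓ d :=
      le_antisymm (inf_le_inf_left a hs.le) (le_inf inf_le_left h3)
    have hacb : a ⊔ c = b := by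
      rcases hr.eq_or_eq (le_sup_left : a ≤ a ⊔ c) (sup_le hr.le (hs.le.trans h1)) with e | e
      · exact absurd (sup_eq_left.1 e) hca
      · exact e
    have hea : a ⊓ d < a := by
      refine lt_of_le_of_ne inf_le_left fun e => ?_
      have had : a ≤ d := inf_eq_left.1 e
      have hbd2 : b = d := le_antisymm (h2 ▸ sup_le had le_rfl) h1
      have hcb : c < b := hbd2 ▸ hs.lt
      rcases hr.eq_or_eq (e ▸ h3 : a ≤ c) hcb.le with e2 | e2
      · exact absurd e2.le hca
      · exact absurd e2 hcb.ne
    have hdb : d < b := by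
      refine lt_of_le_of_ne h1 fun e => ?_
      have : a ≤ d := e ▸ hr.le
      exact hea.ne (inf_eq_left.2 this)
    refine ⟨a ⊓ d, a, c, d, b, ⟨hea, hr.lt, hec, hs.lt, hdb, hace, rfl, hacb, h2⟩, ?_⟩
    intro x hx
    simp at hx ⊢
    tauto

theorem exists_drop [Fintype L] {p q : L × L} (hp : IsPrimeInt p)
    (hne : conOf q.1 q.2 ≠ conOf p.1 p.2)
    (hcov : ∀ θ : LatCon L, θ.JoinIrreducible → (conOf q.1 q.2).le θ →
      θ.le (conOf p.1 p.2) → θ = conOf q.1 q.2 ∨ θ = conOf p.1 p.2)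
    (hppp : PPP p q) :
    ∃ r s : L × L, IsPrimeInt r ∧ IsPrimeInt s ∧ PPersp r s ∧
      conOf r.1 r.2 = conOf p.1 p.2 ∧ conOf s.1 s.2 = conOf q.1 q.2 := by
  have main : ∀ t : L × L, PPP t q → IsPrimeInt t → conOf t.1 t.2 = conOf p.1 p.2 →
      ∃ r s : L × L, IsPrimeInt r ∧ IsPrimeInt s ∧ PPersp r s ∧
        conOf r.1 r.2 = conOf p.1 p.2 ∧ conOf s.1 s.2 = conOf q.1 q.2 := by
    intro t ht
    induction ht using Relation.ReflTransGen.head_induction_on with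
    | refl => intro _ heq; exact absurd heq hne
    | @head t c hstep htail ih =>
      intro hta heq
      obtain ⟨hpersp, hcprime⟩ := hstep
      have hqc : (conOf q.1 q.2).le (conOf c.1 c.2) := PPP.con_le htail
      have hcp : (conOf c.1 c.2).le (conOf p.1 p.2) := by
        rw [← heq]
        exact conOf_le (PStep.collapse ⟨hpersp, hcprime⟩ _ (conOf_rel_self _ _))
      rcases hcov _ (conOf_joinIrreducible hcprime) hqc hcp with e | e
      · exact ⟨t, c, hta, hcprime, hpersp, heq, e⟩
      · exact ih hcprime e
  exact main p hppp hp rfl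

end AuxProof
theorem conOf_cover_N5_or_square [Fintype L] (p q : L × L)
    (hp : IsPrimeInt p) (hq : IsPrimeInt q)
    (hle : (conOf q.1 q.2).le (conOf p.1 p.2))
    (hne : conOf q.1 q.2 ≠ conOf p.1 p.2)
    (hji_p : (conOf p.1 p.2).JoinIrreducible) (hji_q : (conOf q.1 q.2).JoinIrreducible)
    (hcov : ∀ θ : LatCon L, θ.JoinIrreducible → (conOf q.1 q.2).le θ →
      θ.le (conOf p.1 p.2) → θ = conOf q.1 q.2 ∨ θ = conOf p.1 p.2) :
    ∃ p₀ q₀ : L × L, IsPrimeInt p₀ ∧ IsPrimeInt q₀ ∧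
      conOf p₀.1 p₀.2 = conOf p.1 p.2 ∧ conOf q₀.1 q₀.2 = conOf q.1 q.2 ∧
      ((∃ e a b c t : L, IsN5 e a b c t ∧
          ({p₀.1, p₀.2, q₀.1, q₀.2} : Set L) ⊆ {e, a, b, c, t}) ∨
       (∃ e a b t : L, IsCovSquare e a b t ∧
          ({p₀.1, p₀.2, q₀.1, q₀.2} : Set L) ⊆ {e, a, b, t})) := by
  have hrel : (conOf p.1 p.2).rel q.1 q.2 := hle q.1 q.2 (conOf_rel_self q.1 q.2)
  have hppp : PPP p q := collapse_ppp hp hq hrel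
  obtain ⟨r, s, hr, hs, hpersp, hre, hse⟩ := exists_drop hp hne hcov hppp
  have hrs : conOf r.1 r.2 ≠ conOf s.1 s.2 := by
    rw [hre, hse]; exact fun e => hne e.symm
  obtain ⟨e, a, b, c, t, hN5, hsub⟩ := drop_N5 hr hs hpersp hrs
  exact ⟨r, s, hr, hs, hre, hse, Or.inl ⟨e, a, b, c, t, hN5, hsub⟩⟩
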